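/- If the graph of colors of an odd properly-colored cycle is a path or a cycle (i.e., has maximum degree 2 and is connected), then it must be an odd cycle; in particular the number of colors is odd. -/

import Mathlib

open SimpleGraph
section
variable {α : Type*} {H : SimpleGraph α}

lemma walk_split_at {a b : α} (q : H.Walk a b) :
    ∀ (n : ℕ), n ≤ q.length →
    ∃ (w1 : H.Walk a (q.getVert n)) (w2 : H.Walk (q.getVert n) b),
      w1.length = n ∧ w2.length = q.length - n ∧
      ∀ m, m ≤ n → w1.getVert m = q.getVert m := by
  induction q with
  | nil =>
    intro n hn
    simp only [SimpleGraph.Walk.length_nil, Nat.le_zero] at hn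
    subst hn
    exact ⟨.nil, .nil, rfl, rfl, fun m hm => rfl⟩
  | @cons a a' b h q ih =>
    intro n hn
    cases n with
    | zero =>
      exact ⟨.nil, .cons h q, rfl, rfl, fun m hm => by
        simp only [Nat.le_zero] at hm; subst hm; rfl⟩
    | succ n =>
      have hn' : n ≤ q.length := by simpa [Nat.succ_le_succ_iff] using hn
      obtain ⟨w1, w2, h1, h2, h3⟩ := ih n hn'
      refine ⟨.cons h w1, w2, by simp [h1], by simpa using h2, ?_⟩
      intro m hm
      cases m with
      | zero => rfl
      | succ m => exact h3 m (by omega)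

lemma closed_walk_split {a : α} (q : H.Walk a a) {i j : ℕ}
    (hij : i < j) (hj : j ≤ q.length) (he : q.getVert i = q.getVert j) :
    ∃ (u : α) (w1 : H.Walk u u) (w2 : H.Walk a a),
      w1.length = j - i ∧ w2.length = q.length - (j - i) := by
  obtain ⟨A, B, hA, hB, hAg⟩ := walk_split_at q j hj
  obtain ⟨A1, A2, hA1, hA2, _⟩ := walk_split_at A i (by omega)
  have hAi : A.getVert i = q.getVert j := by rw [hAg i hij.le, he]
  refine ⟨q.getVert j, A2.copy hAi rfl, A1.append (B.copy hAi.symm rfl), ?_, ?_⟩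
  · simp [hA2, hA]
  · simp only [SimpleGraph.Walk.length_append, SimpleGraph.Walk.length_copy, hA1, hB]
    omega

end

/-- Let `p` be an odd cycle properly colored by `c`, with every color of `K` used, and let `H`
be the graph of colors (two colors adjacent iff some edge of the cycle joins them). If `H` is
connected with maximum degree at most 2, then `H` is an odd cycle: it is 2-regular and the
number of colors is odd. -/
theorem stmt14 {V K : Type*} [Fintype K] (G : SimpleGraph V) (v : V) (p : G.Walk v v)
    (hp : p.IsCycle) (hodd : Odd p.length) (c : V → K)
    (hc : ∀ a b : V, s(a, b) ∈ p.edges → c a ≠ c b)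
    (hsurj : ∀ x : K, ∃ a ∈ p.support, c a = x)
    (H : SimpleGraph K)
    (hH : ∀ x y : K, H.Adj x y ↔ x ≠ y ∧ ∃ a b : V, s(a, b) ∈ p.edges ∧ c a = x ∧ c b = y)
    (hconn : H.Connected)
    (hdeg : ∀ x : K, (H.neighborSet x).ncard ≤ 2) :
    (∀ x : K, (H.neighborSet x).ncard = 2) ∧ Odd (Fintype.card K) := by
  classical
  -- lift the cycle to a closed walk in H
  have lift : ∀ {a b : V} (q : G.Walk a b), (∀ e ∈ q.edges, e ∈ p.edges) →
      ∃ w : H.Walk (c a) (c b), w.length = q.length := by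
    intro a b q
    induction q with
    | nil => exact fun _ => ⟨.nil, rfl⟩
    | @cons a a' b h q ih =>
      intro hsub
      have he : s(a, a') ∈ p.edges := hsub _ (by simp)
      have hadj : H.Adj (c a) (c a') := (hH _ _).mpr ⟨hc _ _ he, a, a', he, rfl, rfl⟩
      obtain ⟨w, hw⟩ := ih (fun e he' => hsub e (by simp [he']))
      exact ⟨.cons hadj w, by simp [hw]⟩
  obtain ⟨W, hWlen⟩ := lift p (fun _ he => he)
  -- minimal odd closed walk
  have hex : ∃ n, Odd n ∧ ∃ (x : K) (w : H.Walk x x), w.length = n :=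
    ⟨p.length, hodd, c v, W, hWlen⟩
  obtain ⟨hLodd, y, w, hwlen⟩ := Nat.find_spec hex
  set L := Nat.find hex with hLdef
  have hmin : ∀ m, m < L → ¬(Odd m ∧ ∃ (x : K) (w : H.Walk x x), w.length = m) :=
    fun m hm => Nat.find_min hex hm
  -- L ≥ 3
  have hL1 : L ≠ 1 := by
    intro h1
    have h0 : 0 < w.length := by omega
    have hadj := w.adj_getVert_succ h0
    rw [SimpleGraph.Walk.getVert_zero] at hadj
    have : w.getVert (0 + 1) = y := by
      have := w.getVert_length
      rw [hwlen, h1] at this; simpa using this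
    rw [this] at hadj
    exact H.irrefl hadj
  have hL3 : 3 ≤ L := by
    obtain ⟨k, hk⟩ := hLodd
    omega
  -- distinctness of vertices along w
  have hinj : ∀ i j, i < j → j < L → w.getVert i ≠ w.getVert j := by
    intro i j hij hj heq
    obtain ⟨u, w1, w2, h1, h2⟩ := closed_walk_split w hij (by omega) heq
    obtain ⟨k, hk⟩ := hLodd
    rcases Nat.even_or_odd (j - i) with ⟨m, hm⟩ | hod
    · exact hmin (L - (j - i)) (by omega)
        ⟨⟨k - m, by omega⟩, y, w2, by rw [h2, hwlen]⟩
    · exact hmin (j - i) (by omega) ⟨hod, u, w1, h1⟩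
  -- the set of vertices on w
  set T : Set K := {u | ∃ i, i < L ∧ w.getVert i = u} with hTdef
  have hTg : ∀ m, m ≤ L → w.getVert m ∈ T := by
    intro m hm
    rcases eq_or_lt_of_le hm with rfl | hm'
    · refine ⟨0, by omega, ?_⟩
      rw [SimpleGraph.Walk.getVert_zero, ← hwlen, w.getVert_length]
    · exact ⟨m, hm', rfl⟩
  have hTnbr : ∀ u ∈ T, (H.neighborSet u).ncard = 2 ∧ H.neighborSet u ⊆ T := by
    rintro u ⟨i, hi, rfl⟩
    have hwl : w.length = L := hwlen
    -- two neighbors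
    have hadj1 : H.Adj (w.getVert i) (w.getVert (i + 1)) :=
      w.adj_getVert_succ (by omega)
    obtain ⟨i', hi'1, hi'2, hne⟩ :
        ∃ i', i' + 1 ≤ L ∧ (i' + 1 = i ∨ (i = 0 ∧ i' + 1 = L)) ∧
          w.getVert (i + 1) ≠ w.getVert i' := by
      rcases Nat.eq_zero_or_pos i with rfl | hpos
      · refine ⟨L - 1, by omega, Or.inr ⟨rfl, by omega⟩, ?_⟩
        exact hinj 1 (L - 1) (by omega) (by omega)
      · refine ⟨i - 1, by omega, Or.inl (by omega), ?_⟩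
        rcases eq_or_lt_of_le (show i + 1 ≤ L by omega) with h | h
        · have h0 : w.getVert (i + 1) = w.getVert 0 := by
            rw [show i + 1 = w.length by omega, w.getVert_length,
              SimpleGraph.Walk.getVert_zero]
          rw [h0]
          exact fun hcon => hinj 0 (i - 1) (by omega) (by omega) hcon
        · exact (hinj (i - 1) (i + 1) (by omega) h).symm
    have hadj2 : H.Adj (w.getVert i) (w.getVert i') := by
      have := w.adj_getVert_succ (show i' < w.length by omega)
      rcases hi'2 with h | ⟨rfl, h⟩
      · rw [h] at this; exact this.symm
      · rw [show i' + 1 = w.length by omega, w.getVert_length] at this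
        rw [SimpleGraph.Walk.getVert_zero]
        exact this.symm
    -- the neighbor set is exactly the pair
    have hsub : ({w.getVert (i + 1), w.getVert i'} : Set K) ⊆ H.neighborSet (w.getVert i) := by
      rintro z (rfl | rfl)
      · exact hadj1
      · exact hadj2
    have hpair : ({w.getVert (i + 1), w.getVert i'} : Set K).ncard = 2 := Set.ncard_pair hne
    have heq : ({w.getVert (i + 1), w.getVert i'} : Set K) = H.neighborSet (w.getVert i) :=
      Set.eq_of_subset_of_ncard_le hsub (by rw [hpair]; exact hdeg _) (Set.toFinite _)
    constructor
    · rw [← heq, hpair]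
    · rw [← heq]
      rintro z (rfl | rfl)
      · exact hTg (i + 1) (by omega)
      · exact hTg i' (by omega)
  -- T is all of K
  have hTall : ∀ z : K, z ∈ T := by
    have hyT : y ∈ T := by
      have := hTg 0 (by omega)
      rwa [SimpleGraph.Walk.getVert_zero] at this
    have step : ∀ {a b : K} (q : H.Walk a b), a ∈ T → b ∈ T := by
      intro a b q
      induction q with
      | nil => exact id
      | @cons a a' b h q ih => exact fun ha => ih ((hTnbr _ ha).2 h)
    intro z
    obtain ⟨q⟩ := hconn.preconnected y z
    exact step q hyT
  constructor
  · intro x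
    exact (hTnbr x (hTall x)).1
  · have hbij : Function.Bijective (fun i : Fin L => w.getVert i.val) := by
      constructor
      · rintro ⟨i, hi⟩ ⟨j, hj⟩ h
        simp only at h
        rcases lt_trichotomy i j with hlt | heq | hgt
        · exact absurd h (hinj i j hlt hj)
        · exact Fin.ext heq
        · exact absurd h.symm (hinj j i hgt hi)
      · intro z
        obtain ⟨i, hi, hz⟩ := hTall z
        exact ⟨⟨i, hi⟩, hz⟩
    have : Fintype.card K = L := by
      rw [← Fintype.card_fin L]
      exact (Fintype.card_of_bijective hbij).symm
    rw [this]
    exact hLodd
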